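/- Let 0 < a < b, c > 1, and 0 < α < α_c := sqrt((c^2-1)/(b c^2 - a)). Then for all real k ≠ 0, with ξ = k + iα, we have |Ŝ(ξ)| < 1 - (1/2) * (b-a)(k^2 - α^2) / (1 + b(k^2 - α^2)), where Ŝ(ξ) = sqrt((1 + a ξ^2)/(1 + b ξ^2)). -/

import Mathlib

open Complex

set_option maxHeartbeats 1000000 in
/-- For `0 < a < b`, `c > 1`, `0 < α < α_c`, and real `k ≠ 0`, with `ξ = k + iα`:
`|Ŝ(ξ)| < 1 - (1/2)(b-a)(k²-α²)/(1+b(k²-α²))`, where `Ŝ(ξ) = √((1+aξ²)/(1+bξ²))`. -/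
theorem abs_S_refined_bound (a b c α : ℝ) (ha : 0 < a) (hab : a < b) (hc : 1 < c)
    (hα : 0 < α) (hαc : α < Real.sqrt ((c ^ 2 - 1) / (b * c ^ 2 - a)))
    (k : ℝ) (hk : k ≠ 0) :
    let ξ : ℂ := (k : ℂ) + (α : ℂ) * Complex.I
    let S : ℂ := ((1 + (a : ℂ) * ξ ^ 2) / (1 + (b : ℂ) * ξ ^ 2)) ^ ((1 : ℂ) / 2)
    ‖S‖ <
      1 - (1 / 2) * ((b - a) * (k ^ 2 - α ^ 2)) / (1 + b * (k ^ 2 - α ^ 2)) := by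
  intro ξ S
  have hb : 0 < b := ha.trans hab
  have hden : 0 < b * c ^ 2 - a := by
    nlinarith [mul_lt_mul_of_pos_left (show (1:ℝ) < c ^ 2 by nlinarith) hb]
  have hα2 : α ^ 2 < (c ^ 2 - 1) / (b * c ^ 2 - a) := (Real.lt_sqrt hα.le).mp hαc
  have hbα : b * α ^ 2 < 1 := by
    rw [lt_div_iff₀ hden] at hα2; nlinarith
  set m : ℝ := k ^ 2 - α ^ 2 with hm
  set n : ℝ := 2 * k * α with hn
  have hk2 : 0 < k ^ 2 := by positivity
  have hbm : 0 < 1 + b * m := by simp only [hm]; nlinarith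
  have ham : 0 < 1 + a * m := by
    rcases le_or_gt m 0 with h | h
    · nlinarith
    · nlinarith
  have hn0 : n ≠ 0 := mul_ne_zero (mul_ne_zero two_ne_zero hk) hα.ne'
  have hn2 : 0 < n ^ 2 := by positivity
  have hξ2 : ξ ^ 2 = (m : ℂ) + (n : ℂ) * I := by
    simp only [ξ, hm, hn]
    push_cast
    linear_combination (α : ℂ) ^ 2 * Complex.I_sq
  have hnum : (1 + (a : ℂ) * ξ ^ 2) = ((1 + a * m : ℝ) : ℂ) + ((a * n : ℝ) : ℂ) * I := by
    rw [hξ2]; push_cast; ring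
  have hdenc : (1 + (b : ℂ) * ξ ^ 2) = ((1 + b * m : ℝ) : ℂ) + ((b * n : ℝ) : ℂ) * I := by
    rw [hξ2]; push_cast; ring
  have han : a * n ≠ 0 := mul_ne_zero ha.ne' hn0
  have hNa : 0 < (1 + a * m) ^ 2 + (a * n) ^ 2 := by positivity
  have hNb : 0 < (1 + b * m) ^ 2 + (b * n) ^ 2 := by positivity
  set z : ℂ := (1 + (a : ℂ) * ξ ^ 2) / (1 + (b : ℂ) * ξ ^ 2) with hz
  have hnum0 : (1 + (a : ℂ) * ξ ^ 2) ≠ 0 := by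
    intro h
    have : Complex.normSq (1 + (a : ℂ) * ξ ^ 2) = 0 := by rw [h]; simp
    rw [hnum, Complex.normSq_add_mul_I] at this
    nlinarith
  have hden0 : (1 + (b : ℂ) * ξ ^ 2) ≠ 0 := by
    intro h
    have : Complex.normSq (1 + (b : ℂ) * ξ ^ 2) = 0 := by rw [h]; simp
    rw [hdenc, Complex.normSq_add_mul_I] at this
    nlinarith [sq_nonneg (b * n), mul_ne_zero hb.ne' hn0]
  have hz0 : z ≠ 0 := div_ne_zero hnum0 hden0
  have habs : ‖S‖ = ‖z‖ ^ ((1 : ℝ) / 2) := by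
    simp only [S, ← hz]
    rw [Complex.norm_cpow_of_ne_zero hz0]
    norm_num
  have hX4 : ‖S‖ ^ 4 =
      ((1 + a * m) ^ 2 + (a * n) ^ 2) / ((1 + b * m) ^ 2 + (b * n) ^ 2) := by
    have h1 : ‖S‖ ^ 4 = ‖z‖ ^ 2 := by
      rw [habs, ← Real.rpow_natCast (‖z‖ ^ ((1:ℝ)/2)) 4,
        ← Real.rpow_natCast (‖z‖) 2, ← Real.rpow_mul (norm_nonneg z)]
      norm_num
    rw [h1, Complex.sq_norm, hz, map_div₀, hnum, hdenc,
      Complex.normSq_add_mul_I, Complex.normSq_add_mul_I]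
  set u : ℝ := (1 + a * m) / (1 + b * m) with hu
  have hupos : 0 < u := div_pos ham hbm
  have hRe : 1 - 1 / 2 * ((b - a) * m) / (1 + b * m) = (1 + u) / 2 := by
    rw [hu]; field_simp; ring
  rw [hRe]
  refine lt_of_pow_lt_pow_left₀ 4 (by positivity) ?_
  rw [hX4]
  have step1 : ((1 + a * m) ^ 2 + (a * n) ^ 2) / ((1 + b * m) ^ 2 + (b * n) ^ 2)
      < u ^ 2 := by
    rw [hu, div_pow, div_lt_div_iff₀ hNb (by positivity)]
    have h2 : a * (1 + b * m) < b * (1 + a * m) := by nlinarith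
    have h3 : (a * (1 + b * m)) ^ 2 < (b * (1 + a * m)) ^ 2 := by
      have hx : 0 < a * (1 + b * m) := mul_pos ha hbm
      have := mul_self_lt_mul_self hx.le h2
      nlinarith [this]
    nlinarith [mul_lt_mul_of_pos_left h3 hn2]
  have step2 : u ^ 2 ≤ ((1 + u) / 2) ^ 4 := by
    nlinarith [sq_nonneg (1 - u), sq_nonneg (1 + u), hupos.le,
      mul_nonneg (sq_nonneg (1 - u)) (sq_nonneg (1 + u))]
  linarith
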